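/- The translation Tr := h ∘ f is Boolean preserving with respect to ⊢d3: for all Lω-sentences φ, ψ one has ⊢d3 Tr(φ∧ψ) ↔ (Tr(φ) ∧ Tr(ψ)) and ⊢d3 Tr(φ→ψ) → (Tr(φ) → Tr(ψ)); moreover SAx* ⊢d3 Tr(¬φ) → ¬Tr(φ) for every Lω-sentence φ. -/

import Mathlib

/- Core: the logic Ld3 : syntax, proof system, semantics, Gödel numbering. -/

inductive Var : Type
  | x
  | y
  | z
deriving DecidableEq

def Var.toNat : Var → Nat
  | .x => 0
  | .y => 1
  | .z => 2

/-- Formulas of the logic `Ld3`: one atomic formula `P(x,y,z)`, connectives `∨, ¬`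
and quantifiers `∃x, ∃y, ∃z`. -/
inductive Fmd3 : Type
  | P : Fmd3
  | or : Fmd3 → Fmd3 → Fmd3
  | not : Fmd3 → Fmd3
  | ex : Var → Fmd3 → Fmd3
deriving DecidableEq

namespace Fmd3

def and (φ ψ : Fmd3) : Fmd3 := .not (.or (.not φ) (.not ψ))

def imp (φ ψ : Fmd3) : Fmd3 := .or (.not φ) ψ

def iff (φ ψ : Fmd3) : Fmd3 := (φ.imp ψ).and (ψ.imp φ)

def all (v : Var) (φ : Fmd3) : Fmd3 := .not (.ex v (.not φ))

def freeVars : Fmd3 → Finset Var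
  | .P => {Var.x, Var.y, Var.z}
  | .or a b => a.freeVars ∪ b.freeVars
  | .not a => a.freeVars
  | .ex v a => a.freeVars.erase v

/-- `Fmd3⁰`: sentences. -/
def IsSentence (φ : Fmd3) : Prop := φ.freeVars = ∅

/-- `Fmd3¹`: formulas whose only free variable is `x`. -/
def OneFree (φ : Fmd3) : Prop := φ.freeVars ⊆ {Var.x}

/-- `φ` is a propositional tautology: every Boolean valuation that respects
`∨` and `¬` (treating other formulas as propositional atoms) makes `φ` true. -/
def Taut (φ : Fmd3) : Prop :=
  ∀ v : Fmd3 → Bool,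
    (∀ a b : Fmd3, v (.or a b) = (v a || v b)) →
    (∀ a : Fmd3, v (.not a) = !(v a)) →
    v φ = true

/-- Satisfaction of an `Fmd3` formula in a model `(M, R)` under evaluation `e`. -/
def Sat (M : Type) (R : M → M → M → Prop) : Fmd3 → (Var → M) → Prop
  | .P, e => R (e .x) (e .y) (e .z)
  | .or a b, e => Sat M R a e ∨ Sat M R b e
  | .not a, e => ¬ Sat M R a e
  | .ex v a, e => ∃ m : M, Sat M R a (Function.update e v m)

/-- A standard (injective) Gödel numbering of `Fmd3`. -/
def encode : Fmd3 → Nat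
  | .P => 0
  | .or a b => 4 * Nat.pair a.encode b.encode + 1
  | .not a => 4 * a.encode + 2
  | .ex v a => 4 * Nat.pair v.toNat a.encode + 3

end Fmd3

/-- The Hilbert-style proof system `⊢d3`, with rules Modus Ponens and Generalization,
and axiom schemes ((1))–((7)). -/
inductive Prf (T : Set Fmd3) : Fmd3 → Prop
  | hyp {φ : Fmd3} : φ ∈ T → Prf T φ
  | taut {φ : Fmd3} : φ.Taut → Prf T φ
  | ax2 (v : Var) (φ ψ : Fmd3) :
      Prf T ((Fmd3.all v (φ.imp ψ)).imp ((Fmd3.ex v φ).imp (Fmd3.ex v ψ)))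
  | ax3 (v : Var) (φ : Fmd3) : Prf T (φ.imp (.ex v φ))
  | ax4 (v : Var) (φ : Fmd3) : Prf T ((Fmd3.ex v (.ex v φ)).imp (.ex v φ))
  | ax5 (v : Var) (φ ψ : Fmd3) :
      Prf T ((Fmd3.ex v (φ.or ψ)).iff ((Fmd3.ex v φ).or (.ex v ψ)))
  | ax6 (v : Var) (φ : Fmd3) :
      Prf T ((Fmd3.ex v (.not (.ex v φ))).imp (.not (.ex v φ)))
  | ax7 (v w : Var) (φ : Fmd3) :
      Prf T ((Fmd3.ex v (.ex w φ)).imp (.ex w (.ex v φ)))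
  | mp {φ ψ : Fmd3} : Prf T (φ.imp ψ) → Prf T φ → Prf T ψ
  | gen {φ : Fmd3} (v : Var) : Prf T φ → Prf T (.all v φ)

/-- Semantic consequence for `Ld3`: every model of `T` satisfies `φ` under every
evaluation. -/
def SemConsD (T : Set Fmd3) (φ : Fmd3) : Prop :=
  ∀ (M : Type) (_ : Nonempty M) (R : M → M → M → Prop),
    (∀ ψ ∈ T, ∀ e : Var → M, ψ.Sat M R e) → ∀ e : Var → M, φ.Sat M R e

/-- Validity for `Ld3`. -/
def ValidD (φ : Fmd3) : Prop := SemConsD ∅ φ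

/-- A set of `Fmd3`-formulas is recursive (decidable w.r.t. the standard
Gödel numbering). -/
def RecSetD (S : Set Fmd3) : Prop :=
  ∃ g : Nat → Bool, Computable g ∧ ∀ φ : Fmd3, φ ∈ S ↔ g φ.encode = true

/- Parameter formulas δxy, δxz, p0, p1; simulated equality and substitution;
pairing axioms Ax and SAx; the relation-algebra and cylindric-algebra reducts. -/

structure Params where
  dxy : Fmd3
  dxz : Fmd3
  p0 : Fmd3
  p1 : Fmd3

/-- The required free-variable sets of the parameter formulas. -/
def GoodParams (P : Params) : Prop :=
  P.dxy.freeVars = {Var.x, Var.y} ∧ P.dxz.freeVars = {Var.x, Var.z} ∧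
    P.p0.freeVars = {Var.x, Var.y} ∧ P.p1.freeVars = {Var.x, Var.y}

/-- A provably true formula. -/
def trueF (P : Params) : Fmd3 := P.dxy.or P.dxy.not

/-- Simulated equality `u ≐ v` between variables. -/
def eqvF (P : Params) : Var → Var → Fmd3
  | .x, .y => P.dxy
  | .y, .x => P.dxy
  | .x, .z => P.dxz
  | .z, .x => P.dxz
  | .y, .z => .ex .x (P.dxy.and P.dxz)
  | .z, .y => .ex .x (P.dxy.and P.dxz)
  | _, _ => trueF P

/- Tarski-style simulated substitution `φ⟨u,v⟩` for `φ` with free variables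
among `{x,y}`. -/
def sXZ (P : Params) (φ : Fmd3) : Fmd3 := .ex .y ((eqvF P .y .z).and φ)
def sYZ (P : Params) (φ : Fmd3) : Fmd3 := .ex .x ((eqvF P .x .y).and (sXZ P φ))
def sYX (P : Params) (φ : Fmd3) : Fmd3 := .ex .z ((eqvF P .x .z).and (sYZ P φ))
def sZX (P : Params) (φ : Fmd3) : Fmd3 := .ex .y ((eqvF P .y .z).and (sYX P φ))
def sZY (P : Params) (φ : Fmd3) : Fmd3 := .ex .x ((eqvF P .x .z).and φ)
def sXX (P : Params) (φ : Fmd3) : Fmd3 := .ex .y ((eqvF P .x .y).and φ)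
def sYY (P : Params) (φ : Fmd3) : Fmd3 := .ex .x ((eqvF P .x .y).and φ)
def sZZ (P : Params) (φ : Fmd3) : Fmd3 := .ex .x ((eqvF P .x .z).and (sXX P φ))

def subst2 (P : Params) (φ : Fmd3) : Var → Var → Fmd3
  | .x, .y => φ
  | .x, .z => sXZ P φ
  | .y, .z => sYZ P φ
  | .y, .x => sYX P φ
  | .z, .x => sZX P φ
  | .z, .y => sZY P φ
  | .x, .x => sXX P φ
  | .y, .y => sYY P φ
  | .z, .z => sZZ P φ

/-- The third variable, distinct from two given distinct variables. -/
def third : Var → Var → Var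
  | .x, .y => .z
  | .y, .x => .z
  | .x, .z => .y
  | .z, .x => .y
  | .y, .z => .x
  | .z, .y => .x
  | v, _ => v

def pform (P : Params) (k : Bool) (u v : Var) : Fmd3 :=
  subst2 P (if k then P.p1 else P.p0) u v

/-- `u_i ≐ v_∅` for distinct `u`, `v`, where the binary sequence `i` is given
in reverse order. -/
def peqDrev (P : Params) (u v : Var) : List Bool → Fmd3
  | [] => eqvF P u v
  | [k] => pform P k u v
  | k :: rest => .ex (third u v) ((peqDrev P u (third u v) rest).and (pform P k (third u v) v))

def peqD2 (P : Params) (u v : Var) (i j : List Bool) : Fmd3 :=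
  match j with
  | [] => peqDrev P u v i.reverse
  | _ => .ex (third u v)
      ((peqDrev P u (third u v) i.reverse).and (peqDrev P v (third u v) j.reverse))

/-- The formula `u_i ≐ v_j` simulating `p_{i_n} ⋯ p_{i_0} u = p_{j_k} ⋯ p_{j_0} v`. -/
def peq (P : Params) (u : Var) (i : List Bool) (v : Var) (j : List Bool) : Fmd3 :=
  if i = [] ∧ j = [] then eqvF P u v
  else if u = v then
    match u with
    | .x => .ex .y ((eqvF P .x .y).and (peqD2 P .x .y i j))
    | .y => .ex .x ((eqvF P .x .y).and (peqD2 P .x .y i j))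
    | .z => .ex .x ((peqDrev P .z .x i.reverse).and (peqDrev P .z .x j.reverse))
  else peqD2 P u v i j

def conjF (P : Params) : List Fmd3 → Fmd3
  | [] => trueF P
  | [a] => a
  | a :: rest => a.and (conjF P rest)

def vars3 : List Var := [.x, .y, .z]

def seqsLen : Nat → List (List Bool)
  | 0 => [[]]
  | n + 1 => (seqsLen n).flatMap fun l => [false :: l, true :: l]

/-- `H`: all binary sequences of length at most 3. -/
def seqH : List (List Bool) := seqsLen 0 ++ seqsLen 1 ++ seqsLen 2 ++ seqsLen 3

def seqH2 : List (List Bool) := seqsLen 0 ++ seqsLen 1 ++ seqsLen 2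

/-- (A1): transitivity of `≐`. -/
def axA1 (P : Params) : List Fmd3 :=
  vars3.flatMap fun u => vars3.flatMap fun v => vars3.flatMap fun w =>
    seqH.flatMap fun i => seqH.flatMap fun j => seqH.map fun k =>
      ((peq P u i v j).and (peq P v j w k)).imp (peq P u i w k)

/-- (A2): congruence of `≐` w.r.t. the projections. -/
def axA2 (P : Params) : List Fmd3 :=
  vars3.flatMap fun u => vars3.flatMap fun v =>
    seqH2.flatMap fun i => seqH2.flatMap fun j => [false, true].map fun k =>
      ((peq P u i v j).and (peq P u (i ++ [k]) u (i ++ [k]))).imp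
        (peq P u (i ++ [k]) v (j ++ [k]))

/-- (A3): existence of pairs. -/
def axA3 (P : Params) : List Fmd3 :=
  vars3.flatMap fun u => vars3.flatMap fun v =>
    (vars3.filter fun w => decide (w ≠ u ∧ w ≠ v)).flatMap fun w =>
      seqH.flatMap fun i => seqH.map fun j =>
        ((peq P u i u i).and (peq P v j v j)).imp
          (.ex w ((peq P w [false] u i).and (peq P w [true] v j)))

/-- (A4): `∃w (u ≐ w)`. -/
def axA4 (P : Params) : List Fmd3 :=
  vars3.flatMap fun u => vars3.map fun w => .ex w (eqvF P u w)

/-- The pairing axiom `Ax`. -/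
def AxF (P : Params) : Fmd3 := conjF P (axA1 P ++ axA2 P ++ axA3 P ++ axA4 P)

/-- (A5), first half: uniqueness of pairs. -/
def axA5a (P : Params) : Fmd3 :=
  ((peq P .x [false] .y [false]).and (peq P .x [true] .y [true])).imp (eqvF P .x .y)

/-- (A5), second half: the two projections have the same domain. -/
def axA5b (P : Params) : Fmd3 :=
  (peq P .x [false] .x [false]).iff (peq P .x [true] .x [true])

/-- The strong pairing axiom `SAx`. -/
def SAxF (P : Params) : Fmd3 := (AxF P).and ((axA5a P).and (axA5b P))

/-- `pair := ∃y p0 ∧ ∃y p1`. -/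
def pairF (P : Params) : Fmd3 := (Fmd3.ex .y P.p0).and (.ex .y P.p1)

/-- `φu_i := ∃x(x ≐ u_i ∧ φ)` for `u ∈ {y,z}`. -/
def appA (P : Params) (φ : Fmd3) (u : Var) (i : List Bool) : Fmd3 :=
  .ex .x ((peq P .x [] u i).and φ)

/-- Relation composition `φ ∘ ψ`. -/
def compF (P : Params) (φ ψ : Fmd3) : Fmd3 :=
  .ex .y ((appA P φ .y [false]).and ((appA P ψ .y [true]).and
    ((peq P .x [false] .y [false, false]).and
      ((peq P .y [false, true] .y [true, false]).and (peq P .y [true, true] .x [true])))))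

/-- Converse `φ⌣`. -/
def convF (P : Params) (φ : Fmd3) : Fmd3 :=
  .ex .y ((appA P φ .y []).and ((peq P .y [false] .x [true]).and (peq P .y [true] .x [false])))

/-- Identity `Id := x_0 ≐ x_1`. -/
def IdF (P : Params) : Fmd3 := peq P .x [false] .x [true]

/-- Complement `−φ := pair ∧ ¬φ`. -/
def negF (P : Params) (φ : Fmd3) : Fmd3 := (pairF P).and φ.not

/-- The universe `dra` of the relation algebra reduct. -/
def dra (P : Params) : Set Fmd3 :=
  {φ | ∃ ψ : Fmd3, ψ.OneFree ∧ Prf {AxF P} (φ.iff (compF P ψ (IdF P)))}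

/-- The congruence `φ ≡_Ax ψ`. -/
def REqv (P : Params) (φ ψ : Fmd3) : Prop := Prf {AxF P} (φ.iff ψ)

/-- `Triplet := x_{11} ≐ x_{11}`. -/
def TripletF (P : Params) : Fmd3 := peq P .x [true, true] .x [true, true]

/-- `φx_i := ∃y(y ≐ x_i ∧ φy)` for `φ ∈ Fmd3¹`. -/
def appX (P : Params) (φ : Fmd3) (i : List Bool) : Fmd3 :=
  .ex .y ((peq P .y [] .x i).and (appA P φ .y []))

/-- `(0) := 0`, `(1) := 10`, `(2) := 11`. -/
def dgt (i : Fin 3) : List Bool :=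
  if i = 0 then [false] else if i = 1 then [true, false] else [true, true]

/-- The formula `T_i`. -/
def TiF (P : Params) (i : Fin 3) : Fmd3 :=
  (appX P (TripletF P) [false]).and ((appX P (TripletF P) [true]).and
    (conjF P (((List.finRange 3).filter fun j => decide (j ≠ i)).map fun j =>
      peq P .x (false :: dgt j) .x (true :: dgt j))))

/-- Cylindrification `c_i φ := φ ∘ T_i`. -/
def ciF (P : Params) (i : Fin 3) (φ : Fmd3) : Fmd3 := compF P φ (TiF P i)

/-- Diagonal `d_{ij} := Triplet x_1 ∧ x_{1(i)} ≐ x_{1(j)}`. -/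
def dijF (P : Params) (i j : Fin 3) : Fmd3 :=
  (appX P (TripletF P) [true]).and (peq P .x (true :: dgt i) .x (true :: dgt j))

/-- Complement in `Dca`: `−φ := Triplet x_1 ∧ ¬φ`. -/
def negC (P : Params) (φ : Fmd3) : Fmd3 := (appX P (TripletF P) [true]).and φ.not

/-- The universe `dca` of the cylindric reduct. -/
def dca (P : Params) : Set Fmd3 :=
  {φ | ∃ ψ : Fmd3, ψ.OneFree ∧
    Prf {SAxF P} (φ.iff ((appX P ψ [true]).and (appX P (TripletF P) [true])))}

/-- The congruence `φ ≡_SAx ψ`. -/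
def CEqv (P : Params) (φ ψ : Fmd3) : Prop := Prf {SAxF P} (φ.iff ψ)

/- The 3-variable restricted fragment L3 of first-order logic, the concrete
parameters built from the definition Δ of P, the pairing sentences π, π⁺,
and the translation h', h from L3 into Ld3. -/

inductive Fm3 : Type
  | mem : Fm3                -- the atomic formula ∈(x,y)
  | eq : Var → Var → Fm3
  | or : Fm3 → Fm3 → Fm3
  | not : Fm3 → Fm3
  | ex : Var → Fm3 → Fm3
deriving DecidableEq

namespace Fm3

def and (φ ψ : Fm3) : Fm3 := .not (.or (.not φ) (.not ψ))

def imp (φ ψ : Fm3) : Fm3 := .or (.not φ) ψ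

def iff (φ ψ : Fm3) : Fm3 := (φ.imp ψ).and (ψ.imp φ)

def all (v : Var) (φ : Fm3) : Fm3 := .not (.ex v (.not φ))

def freeVars : Fm3 → Finset Var
  | .mem => {Var.x, Var.y}
  | .eq u v => {u, v}
  | .or a b => a.freeVars ∪ b.freeVars
  | .not a => a.freeVars
  | .ex v a => a.freeVars.erase v

def IsSentence (φ : Fm3) : Prop := φ.freeVars = ∅

def Sat (M : Type) (E : M → M → Prop) : Fm3 → (Var → M) → Prop
  | .mem, e => E (e .x) (e .y)
  | .eq u v, e => e u = e v
  | .or a b, e => Sat M E a e ∨ Sat M E b e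
  | .not a, e => ¬ Sat M E a e
  | .ex v a, e => ∃ m : M, Sat M E a (Function.update e v m)

def encode : Fm3 → Nat
  | .mem => 0
  | .eq u v => 5 * Nat.pair u.toNat v.toNat + 1
  | .or a b => 5 * Nat.pair a.encode b.encode + 2
  | .not a => 5 * a.encode + 3
  | .ex v a => 5 * Nat.pair v.toNat a.encode + 4

end Fm3

/-- First-order semantic consequence for `L3`. -/
def SemCons3 (T : Set Fm3) (φ : Fm3) : Prop :=
  ∀ (M : Type) (_ : Nonempty M) (E : M → M → Prop),
    (∀ ψ ∈ T, ∀ e : Var → M, ψ.Sat M E e) → ∀ e : Var → M, φ.Sat M E e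

/- Tarski-style substitution in `L3` (with real equality). -/
def s3XZ (φ : Fm3) : Fm3 := .ex .y ((Fm3.eq .y .z).and φ)
def s3YZ (φ : Fm3) : Fm3 := .ex .x ((Fm3.eq .x .y).and (s3XZ φ))
def s3YX (φ : Fm3) : Fm3 := .ex .z ((Fm3.eq .x .z).and (s3YZ φ))
def s3ZX (φ : Fm3) : Fm3 := .ex .y ((Fm3.eq .y .z).and (s3YX φ))
def s3ZY (φ : Fm3) : Fm3 := .ex .x ((Fm3.eq .x .z).and φ)
def s3XX (φ : Fm3) : Fm3 := .ex .y ((Fm3.eq .x .y).and φ)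
def s3YY (φ : Fm3) : Fm3 := .ex .x ((Fm3.eq .x .y).and φ)
def s3ZZ (φ : Fm3) : Fm3 := .ex .x ((Fm3.eq .x .z).and (s3XX φ))

def subst3 (φ : Fm3) : Var → Var → Fm3
  | .x, .y => φ
  | .x, .z => s3XZ φ
  | .y, .z => s3YZ φ
  | .y, .x => s3YX φ
  | .z, .x => s3ZX φ
  | .z, .y => s3ZY φ
  | .x, .x => s3XX φ
  | .y, .y => s3YY φ
  | .z, .z => s3ZZ φ

/-- `u ∈ v` in `L3`. -/
def mem3 (u v : Var) : Fm3 := subst3 .mem u v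

/-- `x = {y}`. -/
def sing3 : Fm3 := .all .z ((mem3 .z .x).iff (Fm3.eq .z .y))

/-- `{x} ∈ y`. -/
def singIn3 : Fm3 := .ex .z ((subst3 sing3 .z .x).and (mem3 .z .y))

/-- `x = {{y}}`. -/
def dsing3 : Fm3 := .ex .z ((subst3 sing3 .z .y).and (subst3 sing3 .x .z))

/-- `x ∈ ∪y`. -/
def inUn3 : Fm3 := .ex .z ((mem3 .x .z).and (mem3 .z .y))

/-- `op(x)`: `x` is an ordered pair. -/
def op3 : Fm3 :=
  (Fm3.ex .y (.all .z ((subst3 singIn3 .z .x).iff (Fm3.eq .y .z)))).and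
    ((Fm3.all .y (.all .z
      ((((subst3 inUn3 .y .x).and (subst3 singIn3 .y .x).not).and
        ((subst3 inUn3 .z .x).and (subst3 singIn3 .z .x).not)).imp (Fm3.eq .y .z)))).and
      (Fm3.all .y (.ex .z ((mem3 .y .x).imp (mem3 .z .y)))))

/-- `p0` in `L3`: "`y` is the first component of the ordered pair `x`". -/
def p03 : Fm3 := op3.and (subst3 singIn3 .y .x)

/-- `p1` in `L3`: "`y` is the second component of the ordered pair `x`". -/
def p13 : Fm3 :=
  op3.and (dsing3.or ((subst3 inUn3 .y .x).and (subst3 singIn3 .y .x).not))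

/-- `π`: the formulas `p03`, `p13` define pairing functions: both are functional
and every two elements are the components of some ordered pair. -/
def piF : Fm3 :=
  (Fm3.all .x (.all .y (.all .z ((p03.and (subst3 p03 .x .z)).imp (Fm3.eq .y .z))))).and
    ((Fm3.all .x (.all .y (.all .z ((p13.and (subst3 p13 .x .z)).imp (Fm3.eq .y .z))))).and
      (Fm3.all .x (.all .y (.ex .z ((subst3 p03 .z .x).and (subst3 p13 .z .y))))))

/-- `π⁺`: `π` strengthened by uniqueness of pairs, equality of the domains of
the two projections, and existence of two distinct elements. -/
def piPlus : Fm3 :=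
  piF.and
    ((Fm3.all .x (.all .y
      ((((Fm3.ex .z ((subst3 p03 .x .z).and (subst3 p03 .y .z))).and
          (Fm3.ex .z ((subst3 p13 .x .z).and (subst3 p13 .y .z)))).imp (Fm3.eq .x .y))))).and
      ((Fm3.all .x ((Fm3.ex .y p03).iff (.ex .y p13))).and
        (Fm3.ex .x (.ex .y (Fm3.eq .x .y).not))))

/- The concrete parameters of `Fmd3` obtained from the definition Δ of `P`. -/

/-- `E := ∀z P(x,y,z)`. -/
def EF : Fmd3 := Fmd3.all .z .P

/-- `D := P(x,y,z) ∧ ¬E`. -/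
def DF : Fmd3 := Fmd3.P.and EF.not

def dxyC : Fmd3 := .ex .z DF
def dxzC : Fmd3 := .ex .y DF

/-- Scaffold parameters (only `dxy`, `dxz` are used by `subst2`/`eqvF`). -/
def P0 : Params := ⟨dxyC, dxzC, Fmd3.P, Fmd3.P⟩

/-- `u inn v := E⟨u,v⟩`. -/
def innF (u v : Var) : Fmd3 := subst2 P0 EF u v

/-- `x ≐ {y}`. -/
def singF : Fmd3 := .all .z ((innF .z .x).iff (eqvF P0 .z .y))

/-- `{x} inn y`. -/
def singInF : Fmd3 := .ex .z ((subst2 P0 singF .z .x).and (innF .z .y))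

/-- `x ≐ {{y}}`. -/
def dsingF : Fmd3 := .ex .z ((subst2 P0 singF .z .y).and (subst2 P0 singF .x .z))

/-- `x inn ∪y`. -/
def inUnF : Fmd3 := .ex .z ((innF .x .z).and (innF .z .y))

/-- `op(x)` in `Fmd3`. -/
def opF : Fmd3 :=
  (Fmd3.ex .y (.all .z ((subst2 P0 singInF .z .x).iff (eqvF P0 .y .z)))).and
    ((Fmd3.all .y (.all .z
      ((((subst2 P0 inUnF .y .x).and (subst2 P0 singInF .y .x).not).and
        ((subst2 P0 inUnF .z .x).and (subst2 P0 singInF .z .x).not)).imp (eqvF P0 .y .z)))).and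
      (Fmd3.all .y (.ex .z ((innF .y .x).imp (innF .z .y)))))

/-- The concrete parameter `p0` of `Fmd3`. -/
def p0C : Fmd3 := opF.and (subst2 P0 singInF .y .x)

/-- The concrete parameter `p1` of `Fmd3`. -/
def p1C : Fmd3 :=
  opF.and (dsingF.or ((subst2 P0 inUnF .y .x).and (subst2 P0 singInF .y .x).not))

/-- The concrete choice of the parameters `δxy, δxz, p0, p1`. -/
def cP : Params := ⟨dxyC, dxzC, p0C, p1C⟩

/-- `φ⟨x_i, x_j⟩ := ∃y∃z(y ≐ x_i ∧ z ≐ x_j ∧ φ⟨y,z⟩)` for `φ ∈ Fmd3²`. -/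
def substXX (φ : Fmd3) (i j : List Bool) : Fmd3 :=
  .ex .y (.ex .z ((peq cP .y [] .x i).and ((peq cP .z [] .x j).and (subst2 cP φ .y .z))))

def idx : Var → Fin 3
  | .x => 0
  | .y => 1
  | .z => 2

/-- The homomorphism `h'` from the formula algebra of `L3` into `Dca`. -/
def hprime : Fm3 → Fmd3
  | .mem => substXX EF (true :: dgt 0) (true :: dgt 1)
  | .eq u v => dijF cP (idx u) (idx v)
  | .or a b => (hprime a).or (hprime b)
  | .not a => negC cP (hprime a)
  | .ex v a => ciF cP (idx v) (hprime a)

/-- `Triplet x_1` (with the concrete parameters). -/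
def TripX1 : Fmd3 := appX cP (TripletF cP) [true]

/-- `SAx* := SAx ∧ ∀x(Triplet x_1 → h'(π⁺))`. -/
def SAxStar : Fmd3 := (SAxF cP).and (.all .x (TripX1.imp (hprime piPlus)))

/-- The translation `h : Fm3 → Fmd3⁰`. -/
def hmap (φ : Fm3) : Fmd3 := .all .x ((SAxStar.and TripX1).imp (hprime φ))

/- The first-order language Lω of set theory (equality and one binary relation
symbol ∈), its semantics, a standard Gödel numbering, and the ZF(C) axioms. -/

inductive FmW : Type
  | mem : Nat → Nat → FmW
  | eq : Nat → Nat → FmW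
  | or : FmW → FmW → FmW
  | not : FmW → FmW
  | ex : Nat → FmW → FmW
deriving DecidableEq

namespace FmW

def and (φ ψ : FmW) : FmW := .not (.or (.not φ) (.not ψ))

def imp (φ ψ : FmW) : FmW := .or (.not φ) ψ

def iff (φ ψ : FmW) : FmW := (φ.imp ψ).and (ψ.imp φ)

def all (v : Nat) (φ : FmW) : FmW := .not (.ex v (.not φ))

def freeVars : FmW → Finset Nat
  | .mem i j => {i, j}
  | .eq i j => {i, j}
  | .or a b => a.freeVars ∪ b.freeVars
  | .not a => a.freeVars
  | .ex v a => a.freeVars.erase v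

def IsSentence (φ : FmW) : Prop := φ.freeVars = ∅

def Sat (M : Type) (E : M → M → Prop) : FmW → (Nat → M) → Prop
  | .mem i j, e => E (e i) (e j)
  | .eq i j, e => e i = e j
  | .or a b, e => Sat M E a e ∨ Sat M E b e
  | .not a, e => ¬ Sat M E a e
  | .ex v a, e => ∃ m : M, Sat M E a (Function.update e v m)

def encode : FmW → Nat
  | .mem i j => 5 * Nat.pair i j
  | .eq i j => 5 * Nat.pair i j + 1
  | .or a b => 5 * Nat.pair a.encode b.encode + 2
  | .not a => 5 * a.encode + 3
  | .ex v a => 5 * Nat.pair v a.encode + 4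

/-- Universal closure. -/
def closure (φ : FmW) : FmW := (φ.freeVars.sort (· ≤ ·)).foldr FmW.all φ

end FmW

/-- First-order semantic consequence for `Lω`. -/
def SemConsW (T : Set FmW) (φ : FmW) : Prop :=
  ∀ (M : Type) (_ : Nonempty M) (E : M → M → Prop),
    (∀ ψ ∈ T, ∀ e : Nat → M, ψ.Sat M E e) → ∀ e : Nat → M, φ.Sat M E e

/-- A recursive set of `Lω`-formulas. -/
def RecSetW (S : Set FmW) : Prop :=
  ∃ g : Nat → Bool, Computable g ∧ ∀ φ : FmW, φ ∈ S ↔ g φ.encode = true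

namespace ZFCax

open FmW

def extAx : FmW := all 0 (all 1 ((all 2 ((mem 2 0).iff (mem 2 1))).imp (eq 0 1)))

def pairAx : FmW :=
  all 0 (all 1 (ex 2 (all 3 ((mem 3 2).iff ((eq 3 0).or (eq 3 1))))))

def unionAx : FmW :=
  all 0 (ex 1 (all 2 ((mem 2 1).iff (ex 3 ((mem 2 3).and (mem 3 0))))))

def powerAx : FmW :=
  all 0 (ex 1 (all 2 ((mem 2 1).iff (all 3 ((mem 3 2).imp (mem 3 0))))))

def inftyAx : FmW :=
  ex 0 ((ex 1 ((mem 1 0).and (all 2 (mem 2 1).not))).and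
    (all 1 ((mem 1 0).imp
      (ex 2 ((mem 2 0).and (all 3 ((mem 3 2).iff ((mem 3 1).or (eq 3 1)))))))))

def foundAx : FmW :=
  all 0 ((ex 1 (mem 1 0)).imp
    (ex 1 ((mem 1 0).and (ex 2 ((mem 2 1).and (mem 2 0))).not)))

/-- Separation scheme, universally closed over the parameters. -/
def sepAx (φ : FmW) (x a b : Nat) : FmW :=
  closure (FmW.all a (FmW.ex b (FmW.all x ((mem x b).iff ((mem x a).and φ)))))

/-- Replacement scheme, universally closed over the parameters. -/
def replAx (φ : FmW) (x y y' a b : Nat) : FmW :=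
  closure (FmW.all a (FmW.imp
    (FmW.all x (FmW.imp (mem x a) (FmW.ex y' (FmW.all y (FmW.iff φ (eq y y'))))))
    (FmW.ex b (FmW.all x (FmW.imp (mem x a) (FmW.ex y (FmW.and (mem y b) φ)))))))

/-- The axiom of choice. -/
def choiceAx : FmW :=
  all 0 ((((all 1 ((mem 1 0).imp (ex 2 (mem 2 1))))).and
      (all 1 (all 2
        (((mem 1 0).and ((mem 2 0).and (ex 3 ((mem 3 1).and (mem 3 2))))).imp (eq 1 2))))).imp
    (ex 1 (all 2 ((mem 2 0).imp
      (ex 3 (all 4 (((mem 4 2).and (mem 4 1)).iff (eq 4 3))))))))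

end ZFCax

/-- The axiom set of `ZF`. -/
def ZFset : Set FmW :=
  ({ZFCax.extAx, ZFCax.pairAx, ZFCax.unionAx, ZFCax.powerAx, ZFCax.inftyAx,
      ZFCax.foundAx} : Set FmW) ∪
    {ψ | ∃ (φ : FmW) (x a b : Nat), a ≠ x ∧ b ≠ x ∧ a ≠ b ∧
        a ∉ φ.freeVars ∧ b ∉ φ.freeVars ∧ ψ = ZFCax.sepAx φ x a b} ∪
    {ψ | ∃ (φ : FmW) (x y y' a b : Nat),
        List.Pairwise (· ≠ ·) [x, y, y', a, b] ∧
        y' ∉ φ.freeVars ∧ a ∉ φ.freeVars ∧ b ∉ φ.freeVars ∧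
        ψ = ZFCax.replAx φ x y y' a b}

/-- The axiom set of `ZFC`. -/
def ZFCset : Set FmW := ZFset ∪ {ZFCax.choiceAx}

/-- `f : FmW → Fm3` is recursive w.r.t. the standard Gödel numberings. -/
def RecFnW3 (f : FmW → Fm3) : Prop :=
  ∃ g : Nat → Nat, Computable g ∧ ∀ φ : FmW, g φ.encode = (f φ).encode
/- ===== Auxiliary machinery for the proof ===== -/
namespace TrBool

/-- `v` does not occur free in `φ` (Boolean test). -/
def notFreeB (v : Var) : Fmd3 → Bool
  | .P => false
  | .or a b => notFreeB v a && notFreeB v b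
  | .not a => notFreeB v a
  | .ex w a => if v = w then true else notFreeB v a

open Fmd3

section Tauts
variable (a b c d p q r s e x : Fmd3)

theorem tImpTrans : Taut ((a.imp b).imp ((b.imp c).imp (a.imp c))) := by
  intro v hor hnot; simp only [Fmd3.imp, hor, hnot]
  cases v a <;> cases v b <;> cases v c <;> rfl

theorem tIffE1 : Taut ((a.iff b).imp (a.imp b)) := by
  intro v hor hnot; simp only [Fmd3.iff, Fmd3.and, Fmd3.imp, hor, hnot]
  cases v a <;> cases v b <;> rfl

theorem tIffE2 : Taut ((a.iff b).imp (b.imp a)) := by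
  intro v hor hnot; simp only [Fmd3.iff, Fmd3.and, Fmd3.imp, hor, hnot]
  cases v a <;> cases v b <;> rfl

theorem tIffIntro : Taut ((a.imp b).imp ((b.imp a).imp (a.iff b))) := by
  intro v hor hnot; simp only [Fmd3.iff, Fmd3.and, Fmd3.imp, hor, hnot]
  cases v a <;> cases v b <;> rfl

theorem tIffNot : Taut ((a.iff b).imp ((a.not).iff (b.not))) := by
  intro v hor hnot; simp only [Fmd3.iff, Fmd3.and, Fmd3.imp, hor, hnot]
  cases v a <;> cases v b <;> rfl

theorem tIffTrans : Taut ((a.iff b).imp ((b.iff c).imp (a.iff c))) := by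
  intro v hor hnot; simp only [Fmd3.iff, Fmd3.and, Fmd3.imp, hor, hnot]
  cases v a <;> cases v b <;> cases v c <;> rfl

theorem tAndL : Taut ((a.and b).imp a) := by
  intro v hor hnot; simp only [Fmd3.and, Fmd3.imp, hor, hnot]
  cases v a <;> cases v b <;> rfl

theorem tAndR : Taut ((a.and b).imp b) := by
  intro v hor hnot; simp only [Fmd3.and, Fmd3.imp, hor, hnot]
  cases v a <;> cases v b <;> rfl

theorem tImpAnd : Taut ((p.imp q).imp ((p.imp r).imp (p.imp (q.and r)))) := by
  intro v hor hnot; simp only [Fmd3.and, Fmd3.imp, hor, hnot]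
  cases v p <;> cases v q <;> cases v r <;> rfl

theorem tComp2 : Taut ((p.imp q).imp ((p.imp r).imp (((q.and r).imp s).imp (p.imp s)))) := by
  intro v hor hnot; simp only [Fmd3.and, Fmd3.imp, hor, hnot]
  cases v p <;> cases v q <;> cases v r <;> cases v s <;> rfl

theorem tOrMono : Taut ((p.imp q).imp ((r.imp s).imp ((p.or r).imp (q.or s)))) := by
  intro v hor hnot; simp only [Fmd3.imp, hor, hnot]
  cases v p <;> cases v q <;> cases v r <;> cases v s <;> rfl

theorem tCurry1 : Taut (((p.and q).imp r).imp (q.imp (p.imp r))) := by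
  intro v hor hnot; simp only [Fmd3.and, Fmd3.imp, hor, hnot]
  cases v p <;> cases v q <;> cases v r <;> rfl

theorem tCurry2 : Taut (((p.and q).imp r).imp (p.imp (q.imp r))) := by
  intro v hor hnot; simp only [Fmd3.and, Fmd3.imp, hor, hnot]
  cases v p <;> cases v q <;> cases v r <;> rfl

theorem tUncurry : Taut ((q.imp (p.imp r)).imp ((p.and q).imp r)) := by
  intro v hor hnot; simp only [Fmd3.and, Fmd3.imp, hor, hnot]
  cases v p <;> cases v q <;> cases v r <;> rfl

theorem tConst : Taut (q.imp (p.imp q)) := by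
  intro v hor hnot; simp only [Fmd3.imp, hor, hnot]
  cases v p <;> cases v q <;> rfl

theorem tId : Taut (p.imp p) := by
  intro v hor hnot; simp only [Fmd3.imp, hor, hnot]
  cases v p <;> rfl

theorem tAndComm : Taut ((p.and q).imp (q.and p)) := by
  intro v hor hnot; simp only [Fmd3.and, Fmd3.imp, hor, hnot]
  cases v p <;> cases v q <;> rfl

theorem tNotAnd : Taut (((a.and b).not).iff ((a.not).or (b.not))) := by
  intro v hor hnot; simp only [Fmd3.iff, Fmd3.and, Fmd3.imp, hor, hnot]
  cases v a <;> cases v b <;> rfl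

theorem tIffNotOr : Taut ((p.iff (q.or r)).imp ((p.not).iff ((q.not).and (r.not)))) := by
  intro v hor hnot; simp only [Fmd3.iff, Fmd3.and, Fmd3.imp, hor, hnot]
  cases v p <;> cases v q <;> cases v r <;> rfl

theorem tTrue2 : Taut ((a.or a.not).and (a.or a.not)) := by
  intro v hor hnot; simp only [Fmd3.and, hor, hnot]
  cases v a <;> rfl

theorem tContrapose : Taut ((a.imp b).imp ((b.not).imp (a.not))) := by
  intro v hor hnot; simp only [Fmd3.imp, hor, hnot]
  cases v a <;> cases v b <;> rfl

theorem tS21 : Taut (q.imp ((p.and q).or p.not)) := by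
  intro v hor hnot; simp only [Fmd3.and, Fmd3.imp, hor, hnot]
  cases v p <;> cases v q <;> rfl

theorem tS21b : Taut ((q.imp (r.or s)).imp (((s.not).and q).imp r)) := by
  intro v hor hnot; simp only [Fmd3.and, Fmd3.imp, hor, hnot]
  cases v q <;> cases v r <;> cases v s <;> rfl

theorem tKAux : Taut (((a.imp b).and b.not).imp a.not) := by
  intro v hor hnot; simp only [Fmd3.and, Fmd3.imp, hor, hnot]
  cases v a <;> cases v b <;> rfl

theorem tContraPQ : Taut (((p.and q).imp r).imp (p.imp ((r.not).imp (q.not)))) := by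
  intro v hor hnot; simp only [Fmd3.and, Fmd3.imp, hor, hnot]
  cases v p <;> cases v q <;> cases v r <;> rfl

theorem tDNI : Taut (p.imp (p.not.not)) := by
  intro v hor hnot; simp only [Fmd3.imp, hor, hnot]
  cases v p <;> rfl

theorem tSwap : Taut ((p.imp (q.imp r)).imp (q.imp (p.imp r))) := by
  intro v hor hnot; simp only [Fmd3.imp, hor, hnot]
  cases v p <;> cases v q <;> cases v r <;> rfl

theorem tFinal3 : Taut ((((p.and q).imp (e.not))).imp (e.imp (p.imp q.not))) := by
  intro v hor hnot; simp only [Fmd3.and, Fmd3.imp, hor, hnot]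
  cases v p <;> cases v q <;> cases v e <;> rfl

theorem tCore1 : Taut ((((s.and x).imp (x.and (((x.and a.not).or (x.and b.not)).not))).iff
    (((s.and x).imp a).and ((s.and x).imp b)))) := by
  intro v hor hnot; simp only [Fmd3.iff, Fmd3.and, Fmd3.imp, hor, hnot]
  cases v s <;> cases v x <;> cases v a <;> cases v b <;> rfl

theorem tCore2 : Taut ((((s.and x).imp ((x.and a.not).or b)).and ((s.and x).imp a)).imp
    ((s.and x).imp b)) := by
  intro v hor hnot; simp only [Fmd3.and, Fmd3.imp, hor, hnot]
  cases v s <;> cases v x <;> cases v a <;> cases v b <;> rfl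

theorem tCore3 : Taut ((((s.and x).imp (x.and a.not)).and ((s.and x).imp a)).imp
    (s.imp x.not)) := by
  intro v hor hnot; simp only [Fmd3.and, Fmd3.imp, hor, hnot]
  cases v s <;> cases v x <;> cases v a <;> rfl

end Tauts

section Combinators
variable {T : Set Fmd3} {a b c p q r s : Fmd3}

theorem tmp1 (t : Taut (a.imp b)) (h : Prf T a) : Prf T b := Prf.mp (Prf.taut t) h
theorem tmp2 (t : Taut (a.imp (b.imp c))) (h1 : Prf T a) (h2 : Prf T b) : Prf T c :=
  Prf.mp (Prf.mp (Prf.taut t) h1) h2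
theorem tmp3 {d : Fmd3} (t : Taut (a.imp (b.imp (c.imp d)))) (h1 : Prf T a) (h2 : Prf T b)
    (h3 : Prf T c) : Prf T d := Prf.mp (Prf.mp (Prf.mp (Prf.taut t) h1) h2) h3

theorem impTrans (h1 : Prf T (a.imp b)) (h2 : Prf T (b.imp c)) : Prf T (a.imp c) :=
  tmp2 (tImpTrans a b c) h1 h2
theorem iffE1 (h : Prf T (a.iff b)) : Prf T (a.imp b) := tmp1 (tIffE1 a b) h
theorem iffE2 (h : Prf T (a.iff b)) : Prf T (b.imp a) := tmp1 (tIffE2 a b) h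
theorem iffIntro (h1 : Prf T (a.imp b)) (h2 : Prf T (b.imp a)) : Prf T (a.iff b) :=
  tmp2 (tIffIntro a b) h1 h2
theorem iffTrans (h1 : Prf T (a.iff b)) (h2 : Prf T (b.iff c)) : Prf T (a.iff c) :=
  tmp2 (tIffTrans a b c) h1 h2
theorem impAnd (h1 : Prf T (p.imp q)) (h2 : Prf T (p.imp r)) : Prf T (p.imp (q.and r)) :=
  tmp2 (tImpAnd p q r) h1 h2
theorem impComp2 (h1 : Prf T (p.imp q)) (h2 : Prf T (p.imp r)) (h3 : Prf T ((q.and r).imp s)) :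
    Prf T (p.imp s) := tmp3 (tComp2 p q r s) h1 h2 h3
theorem orMono (h1 : Prf T (p.imp q)) (h2 : Prf T (r.imp s)) : Prf T ((p.or r).imp (q.or s)) :=
  tmp2 (tOrMono p q r s) h1 h2
theorem impConst (h : Prf T q) (p : Fmd3) : Prf T (p.imp q) := tmp1 (tConst (p := p) (q := q)) h
theorem projL : Prf T ((p.and q).imp p) := Prf.taut (tAndL p q)
theorem projR : Prf T ((p.and q).imp q) := Prf.taut (tAndR p q)
theorem impId : Prf T (p.imp p) := Prf.taut (tId p)

theorem exMono (v : Var) (h : Prf T (a.imp b)) : Prf T ((Fmd3.ex v a).imp (.ex v b)) :=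
  Prf.mp (Prf.ax2 v a b) (Prf.gen v h)

theorem exCong (v : Var) (h : Prf T (a.iff b)) : Prf T ((Fmd3.ex v a).iff (.ex v b)) :=
  iffIntro (exMono v (iffE1 h)) (exMono v (iffE2 h))

theorem allMono (v : Var) (h : Prf T (a.imp b)) : Prf T ((Fmd3.all v a).imp (.all v b)) := by
  have n : Prf T ((b.not).imp (a.not)) := tmp1 (tContrapose a b) h
  have e : Prf T ((Fmd3.ex v b.not).imp (.ex v a.not)) := exMono v n
  exact tmp1 (tContrapose _ _) e

theorem allCong (v : Var) (h : Prf T (a.iff b)) : Prf T ((Fmd3.all v a).iff (.all v b)) :=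
  iffIntro (allMono v (iffE1 h)) (allMono v (iffE2 h))

theorem dfreeNot {v : Var} (hd : Prf T ((Fmd3.ex v a).imp a)) :
    Prf T ((Fmd3.ex v a.not).imp a.not) := by
  have i1 : Prf T (a.iff (.ex v a)) := iffIntro (Prf.ax3 v a) hd
  have i2 : Prf T ((a.not).iff ((Fmd3.ex v a).not)) := tmp1 (tIffNot _ _) i1
  have i3 : Prf T ((Fmd3.ex v a.not).imp (.ex v ((Fmd3.ex v a).not))) := exMono v (iffE1 i2)
  have i5 : Prf T ((Fmd3.ex v a.not).imp ((Fmd3.ex v a).not)) := impTrans i3 (Prf.ax6 v a)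
  exact impTrans i5 (iffE2 i2)

theorem dfreeOf {v : Var} : ∀ (φ : Fmd3), notFreeB v φ = true → Prf T ((Fmd3.ex v φ).imp φ)
  | .P, h => by simp [notFreeB] at h
  | .or a b, h => by
      have h' := h
      simp only [notFreeB, Bool.and_eq_true] at h'
      have ea := dfreeOf a h'.1
      have eb := dfreeOf b h'.2
      exact impTrans (iffE1 (Prf.ax5 v a b)) (orMono ea eb)
  | .not a, h => dfreeNot (dfreeOf a h)
  | .ex w a, h => by
      by_cases hvw : v = w
      · subst hvw; exact Prf.ax4 v a
      · have h' : notFreeB v a = true := by simpa [notFreeB, hvw] using h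
        exact impTrans (Prf.ax7 v w a) (exMono w (dfreeOf a h'))

theorem exMove {v : Var} {φ : Fmd3} (hd : Prf T ((Fmd3.ex v φ).imp φ)) (ψ : Fmd3) :
    Prf T ((φ.and (.ex v ψ)).imp (.ex v (φ.and ψ))) := by
  set θ := Fmd3.ex v (φ.and ψ) with hθ
  have m1 : Prf T (ψ.imp (φ.imp θ)) := tmp1 (tCurry1 φ ψ θ) (Prf.ax3 v (φ.and ψ))
  have m2 : Prf T ((Fmd3.ex v ψ).imp (.ex v (φ.imp θ))) := exMono v m1
  have m3 : Prf T ((Fmd3.ex v ((φ.not).or θ)).imp ((Fmd3.ex v φ.not).or (.ex v θ))) :=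
    iffE1 (Prf.ax5 v φ.not θ)
  have m4 : Prf T (((Fmd3.ex v φ.not).or (.ex v θ)).imp ((φ.not).or θ)) :=
    orMono (dfreeNot hd) (Prf.ax4 v (φ.and ψ))
  have m5 : Prf T ((Fmd3.ex v ψ).imp (φ.imp θ)) := impTrans m2 (impTrans m3 m4)
  exact tmp1 (tUncurry φ (.ex v ψ) θ) m5

theorem allAnd (v : Var) (a b : Fmd3) :
    Prf T ((Fmd3.all v (a.and b)).iff ((Fmd3.all v a).and (.all v b))) := by
  have E1 : Prf T (((a.and b).not).iff ((a.not).or (b.not))) := Prf.taut (tNotAnd a b)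
  have E4 : Prf T ((Fmd3.ex v ((a.and b).not)).iff ((Fmd3.ex v a.not).or (.ex v b.not))) :=
    iffTrans (exCong v E1) (Prf.ax5 v a.not b.not)
  exact tmp1 (tIffNotOr _ _ _) E4

theorem allExMove (v : Var) (φ ψ : Fmd3) :
    Prf T (((Fmd3.all v φ).and (.ex v ψ)).imp (.ex v (φ.and ψ))) := by
  have e2 : Prf T ((Fmd3.ex v ψ).imp (.ex v ((φ.and ψ).or φ.not))) :=
    exMono v (Prf.taut (tS21 φ ψ))
  have e5 : Prf T ((Fmd3.ex v ψ).imp ((Fmd3.ex v (φ.and ψ)).or (.ex v φ.not))) :=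
    impTrans e2 (iffE1 (Prf.ax5 v (φ.and ψ) φ.not))
  exact tmp1 (tS21b (.ex v ψ) (.ex v (φ.and ψ)) (.ex v φ.not)) e5

theorem allK (v : Var) (a b : Fmd3) :
    Prf T ((Fmd3.all v (a.imp b)).imp ((Fmd3.all v a).imp (.all v b))) := by
  have k2 := allExMove (T := T) v (a.imp b) b.not
  have k3 : Prf T ((Fmd3.ex v ((a.imp b).and b.not)).imp (.ex v a.not)) :=
    exMono v (Prf.taut (tKAux a b))
  have k4 := impTrans k2 k3
  exact tmp1 (tContraPQ _ _ _) k4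

end Combinators

end TrBool
namespace TrBool
open Fmd3

section Ax
variable {T : Set Fmd3}

theorem mem_axA1 {P : Params} {u v w : Var} {i j k : List Bool}
    (hu : u ∈ vars3) (hv : v ∈ vars3) (hw : w ∈ vars3)
    (hi : i ∈ seqH) (hj : j ∈ seqH) (hk : k ∈ seqH) :
    (((peq P u i v j).and (peq P v j w k)).imp (peq P u i w k)) ∈ axA1 P := by
  unfold axA1
  exact List.mem_flatMap.mpr ⟨u, hu, List.mem_flatMap.mpr ⟨v, hv, List.mem_flatMap.mpr ⟨w, hw,
    List.mem_flatMap.mpr ⟨i, hi, List.mem_flatMap.mpr ⟨j, hj, List.mem_map.mpr ⟨k, hk, rfl⟩⟩⟩⟩⟩⟩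

theorem mem_axA2 {P : Params} {u v : Var} {i j : List Bool} {k : Bool}
    (hu : u ∈ vars3) (hv : v ∈ vars3) (hi : i ∈ seqH2) (hj : j ∈ seqH2)
    (hk : k ∈ [false, true]) :
    (((peq P u i v j).and (peq P u (i ++ [k]) u (i ++ [k]))).imp
      (peq P u (i ++ [k]) v (j ++ [k]))) ∈ axA2 P := by
  unfold axA2
  exact List.mem_flatMap.mpr ⟨u, hu, List.mem_flatMap.mpr ⟨v, hv,
    List.mem_flatMap.mpr ⟨i, hi, List.mem_flatMap.mpr ⟨j, hj, List.mem_map.mpr ⟨k, hk, rfl⟩⟩⟩⟩⟩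

theorem mem_axA3 {P : Params} {u v w : Var} {i j : List Bool}
    (hu : u ∈ vars3) (hv : v ∈ vars3)
    (hw : w ∈ vars3.filter fun w => decide (w ≠ u ∧ w ≠ v))
    (hi : i ∈ seqH) (hj : j ∈ seqH) :
    (((peq P u i u i).and (peq P v j v j)).imp
      (.ex w ((peq P w [false] u i).and (peq P w [true] v j)))) ∈ axA3 P := by
  unfold axA3
  exact List.mem_flatMap.mpr ⟨u, hu, List.mem_flatMap.mpr ⟨v, hv, List.mem_flatMap.mpr ⟨w, hw,
    List.mem_flatMap.mpr ⟨i, hi, List.mem_map.mpr ⟨j, hj, rfl⟩⟩⟩⟩⟩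

theorem mem_axA4 {P : Params} {u w : Var} (hu : u ∈ vars3) (hw : w ∈ vars3) :
    (Fmd3.ex w (eqvF P u w)) ∈ axA4 P := by
  unfold axA4
  exact List.mem_flatMap.mpr ⟨u, hu, List.mem_map.mpr ⟨w, hw, rfl⟩⟩

theorem prf_conj {P : Params} : ∀ {l : List Fmd3} {φ : Fmd3},
    Prf T (conjF P l) → φ ∈ l → Prf T φ
  | [], _, _, h => absurd h List.not_mem_nil
  | [a], φ, hc, h => by
      rcases List.mem_singleton.mp h with rfl
      exact hc
  | a :: b :: t, φ, hc, h => by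
      have hc' : Prf T (a.and (conjF P (b :: t))) := hc
      rcases List.mem_cons.mp h with rfl | h'
      · exact tmp1 (tAndL _ _) hc'
      · exact prf_conj (tmp1 (tAndR _ _) hc') h'

theorem prf_Ax_mem (hAx : Prf T (AxF cP)) {φ : Fmd3}
    (h : φ ∈ axA1 cP ++ axA2 cP ++ axA3 cP ++ axA4 cP) : Prf T φ :=
  prf_conj hAx h

theorem prfA1 (hAx : Prf T (AxF cP)) {u v w : Var} {i j k : List Bool}
    (hu : u ∈ vars3) (hv : v ∈ vars3) (hw : w ∈ vars3)
    (hi : i ∈ seqH) (hj : j ∈ seqH) (hk : k ∈ seqH) :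
    Prf T (((peq cP u i v j).and (peq cP v j w k)).imp (peq cP u i w k)) :=
  prf_Ax_mem hAx (List.mem_append_left _ (List.mem_append_left _
    (List.mem_append_left _ (mem_axA1 hu hv hw hi hj hk))))

theorem prfA2 (hAx : Prf T (AxF cP)) {u v : Var} {i j : List Bool} {k : Bool}
    (hu : u ∈ vars3) (hv : v ∈ vars3) (hi : i ∈ seqH2) (hj : j ∈ seqH2)
    (hk : k ∈ [false, true]) :
    Prf T (((peq cP u i v j).and (peq cP u (i ++ [k]) u (i ++ [k]))).imp
      (peq cP u (i ++ [k]) v (j ++ [k]))) :=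
  prf_Ax_mem hAx (List.mem_append_left _ (List.mem_append_left _
    (List.mem_append_right _ (mem_axA2 hu hv hi hj hk))))

theorem prfA3 (hAx : Prf T (AxF cP)) {u v w : Var} {i j : List Bool}
    (hu : u ∈ vars3) (hv : v ∈ vars3)
    (hw : w ∈ vars3.filter fun w => decide (w ≠ u ∧ w ≠ v))
    (hi : i ∈ seqH) (hj : j ∈ seqH) :
    Prf T (((peq cP u i u i).and (peq cP v j v j)).imp
      (.ex w ((peq cP w [false] u i).and (peq cP w [true] v j)))) :=
  prf_Ax_mem hAx (List.mem_append_left _ (List.mem_append_right _ (mem_axA3 hu hv hw hi hj)))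

theorem prfA4 (hAx : Prf T (AxF cP)) {u w : Var} (hu : u ∈ vars3) (hw : w ∈ vars3) :
    Prf T (Fmd3.ex w (eqvF cP u w)) :=
  prf_Ax_mem hAx (List.mem_append_right _ (mem_axA4 hu hw))

/-- Generic "flip" lemma: from `a₁ ≐ b` (projection form) derive `b ≐ a₁`. -/
theorem flipG (a b c : Var)
    (hEq : peq cP b [] a [true] = .ex c ((eqvF cP b c).and (peq cP a [true] c [])))
    (hA1 : Prf T (((peq cP a [true] b []).and (eqvF cP b c)).imp (peq cP a [true] c [])))
    (hA4 : Prf T (.ex c (eqvF cP b c)))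
    (hNF : notFreeB c (peq cP a [true] b []) = true) :
    Prf T ((peq cP a [true] b []).imp (peq cP b [] a [true])) := by
  set φ := peq cP a [true] b [] with hφ
  set e := eqvF cP b c with he
  set ψ := peq cP a [true] c [] with hψ
  have s1 : Prf T ((φ.and e).imp (e.and ψ)) := impAnd projR hA1
  have s3 : Prf T ((φ.and e).imp (.ex c (e.and ψ))) := impTrans s1 (Prf.ax3 c (e.and ψ))
  have s5 : Prf T ((Fmd3.ex c (φ.and e)).imp (.ex c (e.and ψ))) :=
    impTrans (exMono c s3) (Prf.ax4 c (e.and ψ))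
  have s6 : Prf T ((φ.and (.ex c e)).imp (.ex c (φ.and e))) := exMove (dfreeOf φ hNF) e
  have s7 : Prf T ((φ.and (.ex c e)).imp (.ex c (e.and ψ))) := impTrans s6 s5
  have s8 : Prf T (φ.imp (.ex c (e.and ψ))) :=
    tmp2 (tCurry1 φ (.ex c e) (.ex c (e.and ψ))) s7 hA4
  rw [hEq]
  exact s8

theorem flip2G {φ1 φ2 X Y : Fmd3} (c : Var)
    (h1 : φ1 = .ex c (X.and Y)) (h2 : φ2 = .ex c (Y.and X)) :
    Prf T (φ1.imp φ2) := by
  subst h1; subst h2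
  exact exMono c (Prf.taut (tAndComm X Y))

end Ax
end TrBool
namespace TrBool
open Fmd3

/- Abbreviations for the concrete construction. -/
def Phip : Fmd3 := (peq cP .z [false] .x []).and (peq cP .z [true] .x [])
def DelF : Fmd3 := peq cP .z [true] .z [true]
def Phiq : Fmd3 := (peq cP .y [false] .z []).and (peq cP .y [true] .z [])
def DqF : Fmd3 := peq cP .y [true] .y [true]
def Dq11F : Fmd3 := peq cP .y [true, true] .y [true, true]
def GamF : Fmd3 := DqF.and Dq11F
def Phir : Fmd3 := (peq cP .x [false] .y []).and (peq cP .x [true] .y [])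
def Inner0 : Fmd3 := (peq cP .x [] .y []).and (TripletF cP)
def MidF : Fmd3 := (peq cP .y [] .x [true]).and (Fmd3.ex .x Inner0)

section Trip
variable {T : Set Fmd3}

/-- `Ax ⊢ Φp → Δ` : the projection `z₁` is defined. -/
theorem step1 (hAx : Prf T (AxF cP)) : Prf T (Phip.imp DelF) := by
  have fl1 : Prf T ((peq cP .z [true] .x []).imp (peq cP .x [] .z [true])) := by
    refine flipG .z .x .y rfl ?_ ?_ (by decide)
    · exact prfA1 hAx (u := Var.z) (i := [true]) (v := Var.x) (j := []) (w := Var.y) (k := []) (by decide) (by decide) (by decide) (by decide) (by decide) (by decide)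
    · exact prfA4 hAx (u := Var.x) (w := Var.y) (by decide) (by decide)
  have dd : Prf T (((peq cP .z [true] .x []).and (peq cP .x [] .z [true])).imp DelF) :=
    prfA1 hAx (u := Var.z) (i := [true]) (v := Var.x) (j := []) (w := Var.z) (k := [true]) (by decide) (by decide) (by decide) (by decide) (by decide) (by decide)
  exact impTrans (projR (p := peq cP .z [false] .x [])) (impComp2 impId fl1 dd)

/-- `Ax ⊢ Δ ∧ Φq → Γ`. -/
theorem step2 (hAx : Prf T (AxF cP)) : Prf T ((DelF.and Phiq).imp GamF) := by
  have fl2 : Prf T ((peq cP .y [true] .z []).imp (peq cP .z [] .y [true])) := by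
    refine flipG .y .z .x rfl ?_ ?_ (by decide)
    · exact prfA1 hAx (u := Var.y) (i := [true]) (v := Var.z) (j := []) (w := Var.x) (k := []) (by decide) (by decide) (by decide) (by decide) (by decide) (by decide)
    · exact prfA4 hAx (u := Var.z) (w := Var.x) (by decide) (by decide)
  have dq : Prf T (((peq cP .y [true] .z []).and (peq cP .z [] .y [true])).imp DqF) :=
    prfA1 hAx (u := Var.y) (i := [true]) (v := Var.z) (j := []) (w := Var.y) (k := [true]) (by decide) (by decide) (by decide) (by decide) (by decide) (by decide)
  have q11a : Prf T (((peq cP .z [] .y [true]).and DelF).imp (peq cP .z [true] .y [true, true])) :=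
    prfA2 hAx (u := Var.z) (i := []) (v := Var.y) (j := [true]) (k := true) (by decide) (by decide) (by decide) (by decide) (by decide)
  have flip2a : Prf T ((peq cP .z [true] .y [true, true]).imp (peq cP .y [true, true] .z [true])) :=
    flip2G (X := peqDrev cP .z .x [true]) (Y := peqDrev cP .y .x [true, true]) .x rfl rfl
  have dq11 : Prf T (((peq cP .y [true, true] .z [true]).and
      (peq cP .z [true] .y [true, true])).imp Dq11F) :=
    prfA1 hAx (u := Var.y) (i := [true,true]) (v := Var.z) (j := [true]) (w := Var.y) (k := [true,true]) (by decide) (by decide) (by decide) (by decide) (by decide) (by decide)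
  set p := DelF.and Phiq with hp
  have hpz1q : Prf T (p.imp (peq cP .y [true] .z [])) :=
    impTrans projR (projR (p := peq cP .y [false] .z []))
  have hDel : Prf T (p.imp DelF) := projL
  have hflip : Prf T (p.imp (peq cP .z [] .y [true])) := impTrans hpz1q fl2
  have hDq : Prf T (p.imp DqF) := impComp2 hpz1q hflip dq
  have h1 : Prf T (p.imp (peq cP .z [true] .y [true, true])) := impComp2 hflip hDel q11a
  have h2 : Prf T (p.imp (peq cP .y [true, true] .z [true])) := impTrans h1 flip2a
  have hDq11 : Prf T (p.imp Dq11F) := impComp2 h2 h1 dq11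
  exact impAnd hDq hDq11

/-- `Ax ⊢ Γ ∧ Φr → Mid`. -/
theorem step3 (hAx : Prf T (AxF cP)) : Prf T ((GamF.and Phir).imp MidF) := by
  set p := GamF.and Phir with hp
  have hx1y : Prf T (p.imp (peq cP .x [true] .y [])) :=
    impTrans projR (projR (p := peq cP .x [false] .y []))
  have fl3 : Prf T ((peq cP .x [true] .y []).imp (peq cP .y [] .x [true])) := by
    refine flipG .x .y .z rfl ?_ ?_ (by decide)
    · exact prfA1 hAx (u := Var.x) (i := [true]) (v := Var.y) (j := []) (w := Var.z) (k := []) (by decide) (by decide) (by decide) (by decide) (by decide) (by decide)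
    · exact prfA4 hAx (u := Var.y) (w := Var.z) (by decide) (by decide)
  have hm1 : Prf T (p.imp (peq cP .y [] .x [true])) := impTrans hx1y fl3
  -- inner: Γ → ∃x Inner0
  have A2b : Prf T (((peq cP .y [] .x []).and DqF).imp (peq cP .y [true] .x [true])) :=
    prfA2 hAx (u := Var.y) (i := []) (v := Var.x) (j := []) (k := true) (by decide) (by decide) (by decide) (by decide) (by decide)
  have A2c : Prf T (((peq cP .y [true] .x [true]).and Dq11F).imp
      (peq cP .y [true, true] .x [true, true])) :=
    prfA2 hAx (u := Var.y) (i := [true]) (v := Var.x) (j := [true]) (k := true) (by decide) (by decide) (by decide) (by decide) (by decide)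
  have flip2b : Prf T ((peq cP .y [true, true] .x [true, true]).imp
      (peq cP .x [true, true] .y [true, true])) :=
    flip2G (X := peqDrev cP .y .z [true, true]) (Y := peqDrev cP .x .z [true, true]) .z rfl rfl
  have A1g : Prf T (((peq cP .x [true, true] .y [true, true]).and
      (peq cP .y [true, true] .x [true, true])).imp (TripletF cP)) :=
    prfA1 hAx (u := Var.x) (i := [true,true]) (v := Var.y) (j := [true,true]) (w := Var.x) (k := [true,true]) (by decide) (by decide) (by decide) (by decide) (by decide) (by decide)
  set e := eqvF cP .y .x with he
  have qe : Prf T ((GamF.and e).imp (peq cP .x [] .y [])) := projR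
  have hGDq : Prf T ((GamF.and e).imp DqF) := impTrans projL projL
  have hGDq11 : Prf T ((GamF.and e).imp Dq11F) := impTrans projL projR
  have q1 : Prf T ((GamF.and e).imp (peq cP .y [true] .x [true])) := impComp2 qe hGDq A2b
  have q2 : Prf T ((GamF.and e).imp (peq cP .y [true, true] .x [true, true])) :=
    impComp2 q1 hGDq11 A2c
  have q3 : Prf T ((GamF.and e).imp (peq cP .x [true, true] .y [true, true])) :=
    impTrans q2 flip2b
  have q4 : Prf T ((GamF.and e).imp (TripletF cP)) := impComp2 q3 q2 A1g
  have innerStep : Prf T ((GamF.and e).imp Inner0) := impAnd qe q4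
  have hA4yx : Prf T (.ex .x e) := prfA4 hAx (u := Var.y) (w := Var.x) (by decide) (by decide)
  have exm : Prf T ((GamF.and (.ex .x e)).imp (.ex .x (GamF.and e))) :=
    exMove (dfreeOf GamF (by decide)) e
  have hInner : Prf T (GamF.imp (.ex .x Inner0)) :=
    impTrans (impAnd impId (impConst hA4yx GamF))
      (impTrans exm (exMono .x innerStep))
  exact impAnd hm1 (impTrans projL hInner)

/-- The key lemma: `Ax ⊢ ∃x (Triplet x₁)`. -/
theorem exTrip (hAx : Prf T (AxF cP)) : Prf T (.ex .x TripX1) := by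
  have prem1 : Prf T ((peq cP .x [] .x []).and (peq cP .x [] .x [])) :=
    Prf.taut (tTrue2 cP.dxy)
  have prem2 : Prf T ((peq cP .z [] .z []).and (peq cP .z [] .z [])) :=
    Prf.taut (tTrue2 cP.dxy)
  have prem3 : Prf T ((peq cP .y [] .y []).and (peq cP .y [] .y [])) :=
    Prf.taut (tTrue2 cP.dxy)
  have hexPhip : Prf T (.ex .z Phip) :=
    Prf.mp (prfA3 hAx (u := Var.x) (v := Var.x) (w := Var.z) (i := []) (j := [])
      (by decide) (by decide) (by decide) (by decide) (by decide)) prem1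
  have hexPhiq : Prf T (.ex .y Phiq) :=
    Prf.mp (prfA3 hAx (u := Var.z) (v := Var.z) (w := Var.y) (i := []) (j := [])
      (by decide) (by decide) (by decide) (by decide) (by decide)) prem2
  have hexPhir : Prf T (.ex .x Phir) :=
    Prf.mp (prfA3 hAx (u := Var.y) (v := Var.y) (w := Var.x) (i := []) (j := [])
      (by decide) (by decide) (by decide) (by decide) (by decide)) prem3
  have u3 : Prf T (GamF.imp (.ex .x MidF)) :=
    impTrans (impAnd impId (impConst hexPhir GamF))
      (impTrans (exMove (dfreeOf GamF (by decide)) Phir) (exMono .x (step3 hAx)))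
  have u2 : Prf T ((DelF.and Phiq).imp (.ex .x MidF)) := impTrans (step2 hAx) u3
  have u2' : Prf T (DelF.imp (.ex .y (.ex .x MidF))) :=
    impTrans (impAnd impId (impConst hexPhiq DelF))
      (impTrans (exMove (dfreeOf DelF (by decide)) Phiq) (exMono .y u2))
  have u1 : Prf T (Phip.imp (.ex .y (.ex .x MidF))) := impTrans (step1 hAx) u2'
  have u0 : Prf T (.ex .z (.ex .y (.ex .x MidF))) := Prf.mp (exMono .z u1) hexPhip
  have strip : Prf T (.ex .y (.ex .x MidF)) :=
    Prf.mp (dfreeOf (.ex .y (.ex .x MidF)) (by decide)) u0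
  have final : Prf T (.ex .x (.ex .y MidF)) := Prf.mp (Prf.ax7 .y .x MidF) strip
  exact final

end Trip
end TrBool
namespace TrBool
open Fmd3

section Hmap
variable {T : Set Fmd3}

theorem hmap_and (a b : Fm3) :
    Prf T ((hmap (Fm3.and a b)).iff ((hmap a).and (hmap b))) := by
  set S := SAxStar with hS
  set X := TripX1 with hX
  set A := hprime a with hA
  set B := hprime b with hB
  have h1 : Prf T (((S.and X).imp (X.and (((X.and A.not).or (X.and B.not)).not))).iff
      ((((S.and X).imp A)).and (((S.and X).imp B)))) := Prf.taut (tCore1 (s := S) (x := X) (a := A) (b := B))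
  have h2 := allCong Var.x h1
  have h3 := allAnd (T := T) Var.x ((S.and X).imp A) ((S.and X).imp B)
  exact iffTrans h2 h3

theorem hmap_imp (a b : Fm3) :
    Prf T ((hmap (Fm3.imp a b)).imp ((hmap a).imp (hmap b))) := by
  set S := SAxStar with hS
  set X := TripX1 with hX
  set A := hprime a with hA
  set B := hprime b with hB
  have g1 : Prf T (((((S.and X).imp ((X.and A.not).or B)).and ((S.and X).imp A))).imp
      ((S.and X).imp B)) := Prf.taut (tCore2 (s := S) (x := X) (a := A) (b := B))
  have g2 := allMono (T := T) Var.x g1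
  have g3 := iffE2 (allAnd (T := T) Var.x ((S.and X).imp ((X.and A.not).or B))
      ((S.and X).imp A))
  have g4 := impTrans g3 g2
  exact tmp1 (tCurry2 _ _ _) g4

theorem hmap_not (a : Fm3) :
    Prf ({SAxStar} : Set Fmd3) ((hmap (Fm3.not a)).imp (hmap a).not) := by
  set T : Set Fmd3 := {SAxStar} with hT
  have hS : Prf T SAxStar := Prf.hyp rfl
  have hSAx : Prf T (SAxF cP) := tmp1 (tAndL _ _) hS
  have hAx : Prf T (AxF cP) := tmp1 (tAndL _ _) hSAx
  have hTrip : Prf T (.ex .x TripX1) := exTrip hAx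
  set S := SAxStar with hSdef
  set X := TripX1 with hX
  set A := hprime a with hA
  set P1 := (S.and X).imp (X.and A.not) with hP1
  set P2 := (S.and X).imp A with hP2
  have core : Prf T ((P1.and P2).imp (S.imp X.not)) := Prf.taut (tCore3 (s := S) (x := X) (a := A))
  have c2 := allMono (T := T) Var.x core
  have c3 : Prf T (((Fmd3.all .x P1).and (.all .x P2)).imp (.all .x (S.imp X.not))) :=
    impTrans (iffE2 (allAnd Var.x P1 P2)) c2
  have c4 := allK (T := T) Var.x S X.not
  have c5 : Prf T (.all .x S) := Prf.gen Var.x hS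
  have c6 : Prf T (((Fmd3.all .x P1).and (.all .x P2)).imp (.all .x X.not)) :=
    impTrans c3 (tmp2 (tSwap _ _ _) c4 c5)
  have c7 : Prf T (.ex .x (X.not.not)) := Prf.mp (exMono .x (Prf.taut (tDNI X))) hTrip
  have c6' : Prf T (((Fmd3.all .x P1).and (.all .x P2)).imp ((Fmd3.ex .x (X.not.not)).not)) := c6
  exact tmp2 (tFinal3 (.all .x P1) (.all .x P2) (.ex .x (X.not.not))) c6' c7

end Hmap
end TrBool
namespace TrBool

theorem sent_not {φ : FmW} (h : φ.IsSentence) : (FmW.not φ).IsSentence := h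

theorem sent_or {φ ψ : FmW} (h1 : φ.IsSentence) (h2 : ψ.IsSentence) :
    (FmW.or φ ψ).IsSentence := by
  unfold FmW.IsSentence at *
  simp only [FmW.freeVars, h1, h2, Finset.union_empty]

end TrBool

/-- **Theorem (Tr = h ∘ f is Boolean preserving w.r.t. ⊢d3).** For all
`Lω`-sentences `φ, ψ`: `⊢d3 Tr(φ∧ψ) ↔ (Tr(φ) ∧ Tr(ψ))` and
`⊢d3 Tr(φ→ψ) → (Tr(φ) → Tr(ψ))`; moreover `SAx* ⊢d3 Tr(¬φ) → ¬Tr(φ)`. -/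
theorem Tr_is_Boolean_preserving (f : FmW → Fm3) (hrec : RecFnW3 f)
    (hfsen : ∀ φ : FmW, φ.IsSentence → (f φ).IsSentence)
    (hfsem : ∀ φ : FmW, φ.IsSentence →
      ∀ (M : Type) (_ : Nonempty M) (E : M → M → Prop),
        (∀ e : Var → M, piPlus.Sat M E e) →
        ((∀ e : Nat → M, φ.Sat M E e) ↔ ∀ e : Var → M, (f φ).Sat M E e))
    (hfnot : ∀ φ : FmW, φ.IsSentence → f φ.not = (f φ).not)
    (hfor : ∀ φ ψ : FmW, φ.IsSentence → ψ.IsSentence → f (φ.or ψ) = (f φ).or (f ψ)) :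
    (∀ φ ψ : FmW, φ.IsSentence → ψ.IsSentence →
      Prf ∅ ((hmap (f (φ.and ψ))).iff ((hmap (f φ)).and (hmap (f ψ)))) ∧
      Prf ∅ ((hmap (f (φ.imp ψ))).imp ((hmap (f φ)).imp (hmap (f ψ))))) ∧
    (∀ φ : FmW, φ.IsSentence →
      Prf {SAxStar} ((hmap (f φ.not)).imp (hmap (f φ)).not)) := by
  constructor
  · intro φ ψ hφ hψ
    have hand : f (φ.and ψ) = Fm3.and (f φ) (f ψ) := by
      show f (FmW.not (.or (.not φ) (.not ψ))) = _
      rw [hfnot _ (TrBool.sent_or (TrBool.sent_not hφ) (TrBool.sent_not hψ)),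
        hfor _ _ (TrBool.sent_not hφ) (TrBool.sent_not hψ), hfnot _ hφ, hfnot _ hψ]
      rfl
    have himp : f (φ.imp ψ) = Fm3.imp (f φ) (f ψ) := by
      show f (FmW.or (.not φ) ψ) = _
      rw [hfor _ _ (TrBool.sent_not hφ) hψ, hfnot _ hφ]
      rfl
    constructor
    · rw [hand]; exact TrBool.hmap_and (f φ) (f ψ)
    · rw [himp]; exact TrBool.hmap_imp (f φ) (f ψ)
  · intro φ hφ
    rw [hfnot _ hφ]
    exact TrBool.hmap_not (f φ)
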